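/- The space of multilinear weak polynomial identities of multidegree (1,1,1) for the pair (A₁, V) has dimension 3, with basis Γ₃(x₁,x₂,x₃), Γ₃(x₁,x₃,x₂), and St₃(x₁,x₂,x₃); moreover Γ₃(x₂,x₃,x₁) = -Γ₃(x₁,x₂,x₃) + Γ₃(x₁,x₃,x₂) in F⟨X⟩. -/

import Mathlib

/-- The defining relation of the Weyl algebra: `y * x = x * y + 1`. -/
inductive WeylRel (F : Type) [Field F] :
    FreeAlgebra F (Fin 2) → FreeAlgebra F (Fin 2) → Prop
  | rel : WeylRel F (FreeAlgebra.ι F 1 * FreeAlgebra.ι F 0)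
      (FreeAlgebra.ι F 0 * FreeAlgebra.ι F 1 + 1)

/-- The Weyl algebra A₁ over `F`. -/
abbrev Weyl (F : Type) [Field F] := RingQuot (WeylRel F)

/-- The generator `x` of the Weyl algebra. -/
noncomputable def Wx (F : Type) [Field F] : Weyl F :=
  RingQuot.mkAlgHom F (WeylRel F) (FreeAlgebra.ι F 0)

/-- The generator `y` of the Weyl algebra. -/
noncomputable def Wy (F : Type) [Field F] : Weyl F :=
  RingQuot.mkAlgHom F (WeylRel F) (FreeAlgebra.ι F 1)

/-- `V = F`-span of `{x, y}` inside the Weyl algebra. -/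
noncomputable def WV (F : Type) [Field F] : Submodule F (Weyl F) :=
  Submodule.span F {Wx F, Wy F}
open FreeAlgebra

/-- Γ₃(x_i, x_j, x_k) = [[x_i, x_j], x_k] in the free algebra. -/
noncomputable def Gamma3 (F : Type) [Field F] (i j k : ℕ) : FreeAlgebra F ℕ :=
  (ι F i * ι F j - ι F j * ι F i) * ι F k - ι F k * (ι F i * ι F j - ι F j * ι F i)

/-- St₃(x_i, x_j, x_k) = x_i[x_j,x_k] - x_j[x_i,x_k] + x_k[x_i,x_j]. -/
noncomputable def St3 (F : Type) [Field F] (i j k : ℕ) : FreeAlgebra F ℕ :=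
  ι F i * (ι F j * ι F k - ι F k * ι F j) - ι F j * (ι F i * ι F k - ι F k * ι F i) +
    ι F k * (ι F i * ι F j - ι F j * ι F i)

/-- The multihomogeneous component of multidegree δ (a multiset of variable indices). -/
noncomputable def mhComponent (F : Type) [Field F] (δ : Multiset ℕ) (f : FreeAlgebra F ℕ) :
    FreeAlgebra F ℕ :=
  letI e : FreeAlgebra F ℕ ≃ₐ[F] MonoidAlgebra F (FreeMonoid ℕ) :=
    FreeAlgebra.equivMonoidAlgebraFreeMonoid
  e.symm (MonoidAlgebra.ofCoeff
    (Finsupp.filter (fun w : FreeMonoid ℕ => (↑(FreeMonoid.toList w) : Multiset ℕ) = δ)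
    (e f).coeff))

/-! ### Auxiliary material -/

section Aux

open Polynomial

variable (F : Type) [Field F]

/-- The `y x = x y + 1` relation in the Weyl algebra. -/
theorem weyl_hyx : Wy F * Wx F = Wx F * Wy F + 1 := by
  have := RingQuot.mkAlgHom_rel F (WeylRel.rel (F := F))
  simpa [Wx, Wy, map_mul, map_add, map_one] using this

/-- The commutator of two elements of `V` is an explicit scalar. -/
theorem weyl_comm_explicit (p q r s : F) :
    (p • Wx F + q • Wy F) * (r • Wx F + s • Wy F)
      - (r • Wx F + s • Wy F) * (p • Wx F + q • Wy F) = (q * r - p * s) • 1 := by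
  simp only [add_mul, mul_add, smul_mul_assoc, mul_smul_comm, weyl_hyx, smul_smul, smul_add,
    sub_smul]
  module

noncomputable def WOp : Fin 2 → Module.End F (Polynomial F) :=
  ![LinearMap.mulLeft F (X : Polynomial F), derivative]

/-- The polynomial representation of the Weyl algebra: `x` acts as multiplication by `X`
and `y` acts as `d/dX`. -/
noncomputable def Wrep : Weyl F →ₐ[F] Module.End F (Polynomial F) :=
  RingQuot.liftAlgHom F ⟨FreeAlgebra.lift F (WOp F), by
    rintro a b ⟨⟩
    simp only [map_mul, map_add, map_one, FreeAlgebra.lift_ι_apply, WOp,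
      Matrix.cons_val_zero, Matrix.cons_val_one, Matrix.head_cons]
    refine LinearMap.ext fun p => ?_
    simp [Module.End.mul_apply, derivative_mul, add_comm]⟩

theorem Wrep_x : Wrep F (Wx F) = LinearMap.mulLeft F (X : Polynomial F) := by
  simp [Wrep, Wx, RingQuot.liftAlgHom_mkAlgHom_apply, FreeAlgebra.lift_ι_apply, WOp]

theorem Wrep_y : Wrep F (Wy F) = (derivative : Polynomial F →ₗ[F] Polynomial F) := by
  simp [Wrep, Wy, RingQuot.liftAlgHom_mkAlgHom_apply, FreeAlgebra.lift_ι_apply, WOp]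

/-- The canonical equivalence with the monoid algebra on words. -/
noncomputable abbrev WkE : FreeAlgebra F ℕ ≃ₐ[F] MonoidAlgebra F (FreeMonoid ℕ) :=
  FreeAlgebra.equivMonoidAlgebraFreeMonoid

theorem WkE_mono (i j k : ℕ) : WkE F (ι F i * ι F j * ι F k) =
    MonoidAlgebra.single (FreeMonoid.ofList [i,j,k]) (1:F) := by
  simp [FreeAlgebra.equivMonoidAlgebraFreeMonoid, MonoidAlgebra.single_mul_single, mul_assoc]

theorem WkE_symm_single (i j k : ℕ) (c : F) :
    (WkE F).symm (MonoidAlgebra.single (FreeMonoid.ofList [i,j,k]) c)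
      = c • (ι F i * ι F j * ι F k) := by
  have : MonoidAlgebra.single (FreeMonoid.ofList [i,j,k]) c
      = c • MonoidAlgebra.single (FreeMonoid.ofList [i,j,k]) (1:F) := by
    rw [MonoidAlgebra.smul_single', mul_one]
  rw [this, map_smul, ← WkE_mono, (WkE F).symm_apply_apply]

theorem mh_mono (i j k : ℕ) (h : (↑([i,j,k]) : Multiset ℕ) = ({0,1,2} : Multiset ℕ)) :
    mhComponent F {0,1,2} (ι F i * ι F j * ι F k) = ι F i * ι F j * ι F k := by
  have hf : Finsupp.filter
      (fun w : FreeMonoid ℕ => (↑(FreeMonoid.toList w) : Multiset ℕ) = ({0,1,2} : Multiset ℕ))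
      (MonoidAlgebra.single (FreeMonoid.ofList [i,j,k]) (1:F)).coeff =
      (MonoidAlgebra.single (FreeMonoid.ofList [i,j,k]) (1:F)).coeff :=
    Finsupp.filter_single_of_pos _ h
  rw [mhComponent, WkE_mono, hf, MonoidAlgebra.ofCoeff_coeff, ← WkE_mono]
  exact (WkE F).symm_apply_apply _

theorem mh_add (δ : Multiset ℕ) (f g : FreeAlgebra F ℕ) :
    mhComponent F δ (f + g) = mhComponent F δ f + mhComponent F δ g := by
  have hf : Finsupp.filter (fun w : FreeMonoid ℕ => (↑(FreeMonoid.toList w) : Multiset ℕ) = δ)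
      (WkE F f + WkE F g).coeff
      = Finsupp.filter _ (WkE F f).coeff + Finsupp.filter _ (WkE F g).coeff := Finsupp.filter_add
  rw [mhComponent, map_add, hf, MonoidAlgebra.ofCoeff_add, map_add]; rfl

theorem mh_sub (δ : Multiset ℕ) (f g : FreeAlgebra F ℕ) :
    mhComponent F δ (f - g) = mhComponent F δ f - mhComponent F δ g := by
  have hf : Finsupp.filter (fun w : FreeMonoid ℕ => (↑(FreeMonoid.toList w) : Multiset ℕ) = δ)
      (WkE F f - WkE F g).coeff
      = Finsupp.filter _ (WkE F f).coeff - Finsupp.filter _ (WkE F g).coeff := Finsupp.filter_sub _ _ _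
  rw [mhComponent, map_sub, hf, MonoidAlgebra.ofCoeff_sub, map_sub]; rfl

theorem weyl_list_cases (l : List ℕ) (h : (↑l : Multiset ℕ) = ({0,1,2} : Multiset ℕ)) :
    l = [0,1,2] ∨ l = [0,2,1] ∨ l = [1,0,2] ∨ l = [1,2,0] ∨ l = [2,0,1] ∨ l = [2,1,0] := by
  have hp : l.Perm [0,1,2] := Multiset.coe_eq_coe.1 h
  have hlen : l.length = 3 := by simpa using hp.length_eq
  match l, hlen with
  | [a,b,c], _ =>
    have ha : a ∈ [0,1,2] := hp.mem_iff.1 (by simp)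
    have hb : b ∈ [0,1,2] := hp.mem_iff.1 (by simp)
    have hc : c ∈ [0,1,2] := hp.mem_iff.1 (by simp)
    simp only [List.mem_cons, List.not_mem_nil, or_false] at ha hb hc
    rcases ha with rfl|rfl|rfl <;> rcases hb with rfl|rfl|rfl <;> rcases hc with rfl|rfl|rfl <;>
      first
        | (exact absurd h (by decide))
        | decide

/-- Decomposition of a multihomogeneous element of multidegree `{0,1,2}` into the six
monomials. -/
theorem weyl_decomp (f : FreeAlgebra F ℕ) (hf : mhComponent F {0,1,2} f = f) :
    f = (WkE F f).coeff (FreeMonoid.ofList [0,1,2]) • (ι F 0 * ι F 1 * ι F 2)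
      + (WkE F f).coeff (FreeMonoid.ofList [0,2,1]) • (ι F 0 * ι F 2 * ι F 1)
      + (WkE F f).coeff (FreeMonoid.ofList [1,0,2]) • (ι F 1 * ι F 0 * ι F 2)
      + (WkE F f).coeff (FreeMonoid.ofList [1,2,0]) • (ι F 1 * ι F 2 * ι F 0)
      + (WkE F f).coeff (FreeMonoid.ofList [2,0,1]) • (ι F 2 * ι F 0 * ι F 1)
      + (WkE F f).coeff (FreeMonoid.ofList [2,1,0]) • (ι F 2 * ι F 1 * ι F 0) := by
  have MAadd : ∀ (a b : MonoidAlgebra F (FreeMonoid ℕ)) (w : FreeMonoid ℕ),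
      (a + b).coeff w = a.coeff w + b.coeff w := fun a b w => Finsupp.add_apply _ _ w
  have hsame : ∀ (l : List ℕ) (c : F),
      (MonoidAlgebra.single (FreeMonoid.ofList l) c).coeff (FreeMonoid.ofList l) = c :=
    fun l c => Finsupp.single_eq_same
  have hne : ∀ (l l' : List ℕ), l ≠ l' → ∀ c : F,
      (MonoidAlgebra.single (FreeMonoid.ofList l) c).coeff (FreeMonoid.ofList l') = 0 :=
    fun l l' h c => Finsupp.single_eq_of_ne' (fun hh => h (congrArg FreeMonoid.toList hh))
  have hEf : Finsupp.filter
      (fun w : FreeMonoid ℕ => (↑(FreeMonoid.toList w) : Multiset ℕ) = ({0,1,2}:Multiset ℕ))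
      (WkE F f).coeff = (WkE F f).coeff := by
    have := congrArg (WkE F) hf
    rw [mhComponent, (WkE F).apply_symm_apply] at this
    exact congrArg MonoidAlgebra.coeff this
  have hzero : ∀ w : FreeMonoid ℕ,
      ¬((↑(FreeMonoid.toList w) : Multiset ℕ) = ({0,1,2}:Multiset ℕ)) → (WkE F f).coeff w = 0 := by
    intro w hw
    have happ : Finsupp.filter
        (fun w : FreeMonoid ℕ => (↑(FreeMonoid.toList w) : Multiset ℕ) = ({0,1,2}:Multiset ℕ))
        (WkE F f).coeff w
        = if (↑(FreeMonoid.toList w) : Multiset ℕ) = ({0,1,2}:Multiset ℕ) then (WkE F f).coeff w else 0 :=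
      Finsupp.filter_apply _ _ _
    rw [hEf, if_neg hw] at happ
    exact happ
  have key : WkE F f
      = MonoidAlgebra.single (FreeMonoid.ofList [0,1,2]) ((WkE F f).coeff (FreeMonoid.ofList [0,1,2]))
      + MonoidAlgebra.single (FreeMonoid.ofList [0,2,1]) ((WkE F f).coeff (FreeMonoid.ofList [0,2,1]))
      + MonoidAlgebra.single (FreeMonoid.ofList [1,0,2]) ((WkE F f).coeff (FreeMonoid.ofList [1,0,2]))
      + MonoidAlgebra.single (FreeMonoid.ofList [1,2,0]) ((WkE F f).coeff (FreeMonoid.ofList [1,2,0]))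
      + MonoidAlgebra.single (FreeMonoid.ofList [2,0,1]) ((WkE F f).coeff (FreeMonoid.ofList [2,0,1]))
      + MonoidAlgebra.single (FreeMonoid.ofList [2,1,0]) ((WkE F f).coeff (FreeMonoid.ofList [2,1,0])) := by
    refine MonoidAlgebra.ext (Finsupp.ext fun w => ?_)
    by_cases hw : (↑(FreeMonoid.toList w) : Multiset ℕ) = ({0,1,2}:Multiset ℕ)
    · rcases weyl_list_cases _ hw with h|h|h|h|h|h
      · obtain rfl : w = FreeMonoid.ofList [0,1,2] := by rw [← FreeMonoid.ofList_toList w, h]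
        rw [MAadd, MAadd, MAadd, MAadd, MAadd, hsame _ _, hne _ _ (by decide) _,
          hne _ _ (by decide) _, hne _ _ (by decide) _, hne _ _ (by decide) _,
          hne _ _ (by decide) _]
        ring
      · obtain rfl : w = FreeMonoid.ofList [0,2,1] := by rw [← FreeMonoid.ofList_toList w, h]
        rw [MAadd, MAadd, MAadd, MAadd, MAadd, hne _ _ (by decide) _, hsame _ _,
          hne _ _ (by decide) _, hne _ _ (by decide) _, hne _ _ (by decide) _,
          hne _ _ (by decide) _]
        ring
      · obtain rfl : w = FreeMonoid.ofList [1,0,2] := by rw [← FreeMonoid.ofList_toList w, h]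
        rw [MAadd, MAadd, MAadd, MAadd, MAadd, hne _ _ (by decide) _, hne _ _ (by decide) _,
          hsame _ _, hne _ _ (by decide) _, hne _ _ (by decide) _, hne _ _ (by decide) _]
        ring
      · obtain rfl : w = FreeMonoid.ofList [1,2,0] := by rw [← FreeMonoid.ofList_toList w, h]
        rw [MAadd, MAadd, MAadd, MAadd, MAadd, hne _ _ (by decide) _, hne _ _ (by decide) _,
          hne _ _ (by decide) _, hsame _ _, hne _ _ (by decide) _, hne _ _ (by decide) _]
        ring
      · obtain rfl : w = FreeMonoid.ofList [2,0,1] := by rw [← FreeMonoid.ofList_toList w, h]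
        rw [MAadd, MAadd, MAadd, MAadd, MAadd, hne _ _ (by decide) _, hne _ _ (by decide) _,
          hne _ _ (by decide) _, hne _ _ (by decide) _, hsame _ _, hne _ _ (by decide) _]
        ring
      · obtain rfl : w = FreeMonoid.ofList [2,1,0] := by rw [← FreeMonoid.ofList_toList w, h]
        rw [MAadd, MAadd, MAadd, MAadd, MAadd, hne _ _ (by decide) _, hne _ _ (by decide) _,
          hne _ _ (by decide) _, hne _ _ (by decide) _, hne _ _ (by decide) _, hsame _ _]
        ring
    · rw [hzero w hw, MAadd, MAadd, MAadd, MAadd, MAadd]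
      have hZ : ∀ (l : List ℕ), ((↑l : Multiset ℕ) = ({0,1,2}:Multiset ℕ)) → ∀ c : F,
          (MonoidAlgebra.single (FreeMonoid.ofList l) c).coeff w = 0 := by
        intro l hl c
        refine Finsupp.single_eq_of_ne' fun hh => hw ?_
        rw [← hh]
        exact hl
      rw [hZ _ (by decide), hZ _ (by decide), hZ _ (by decide), hZ _ (by decide),
        hZ _ (by decide), hZ _ (by decide)]
      ring
  have hmain := congrArg (WkE F).symm key
  rw [(WkE F).symm_apply_apply] at hmain
  conv_lhs => rw [hmain]
  simp only [map_add, WkE_symm_single]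

/-- Monomial expansions of the three identities. -/
theorem Gamma3_expand (i j k : ℕ) : Gamma3 F i j k
    = ι F i * ι F j * ι F k - ι F j * ι F i * ι F k - ι F k * ι F i * ι F j
      + ι F k * ι F j * ι F i := by
  rw [Gamma3]; noncomm_ring

theorem St3_expand : St3 F 0 1 2
    = ι F 0 * ι F 1 * ι F 2 - ι F 0 * ι F 2 * ι F 1 - ι F 1 * ι F 0 * ι F 2
      + ι F 1 * ι F 2 * ι F 0 + ι F 2 * ι F 0 * ι F 1 - ι F 2 * ι F 1 * ι F 0 := by
  rw [St3]; noncomm_ring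


/-- The coefficient functional at the word `l`. -/
noncomputable def Wcoeff (F : Type) [Field F] (l : List ℕ) : FreeAlgebra F ℕ →ₗ[F] F :=
  (Finsupp.lapply (M := F) (R := F) (FreeMonoid.ofList l)).comp
    ((MonoidAlgebra.coeffLinearEquiv F (S := F) (M := FreeMonoid ℕ)).toLinearMap.comp (WkE F).toLinearMap)

theorem Wcoeff_mono (F : Type) [Field F] (l : List ℕ) (i j k : ℕ) :
    Wcoeff F l (ι F i * ι F j * ι F k) = if [i,j,k] = l then 1 else 0 := by
  have : Wcoeff F l (ι F i * ι F j * ι F k)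
      = (MonoidAlgebra.single (FreeMonoid.ofList [i,j,k]) (1:F)).coeff (FreeMonoid.ofList l) :=
    congrArg (fun z : MonoidAlgebra F (FreeMonoid ℕ) => z.coeff (FreeMonoid.ofList l)) (WkE_mono F i j k)
  rw [this]
  by_cases h : [i,j,k] = l
  · subst h
    rw [if_pos rfl]
    exact Finsupp.single_eq_same
  · rw [if_neg h]
    exact Finsupp.single_eq_of_ne' (fun hh => h (congrArg FreeMonoid.toList hh))

end Aux


section Parts

variable (F : Type) [Field F]

theorem weyl_hxmem : Wx F ∈ WV F := Submodule.subset_span (by simp)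
theorem weyl_hymem : Wy F ∈ WV F := Submodule.subset_span (by simp)

set_option maxHeartbeats 1000000 in
theorem weyl_part1 : LinearIndependent F ![Gamma3 F 0 1 2, Gamma3 F 0 2 1, St3 F 0 1 2] := by
  rw [Fintype.linearIndependent_iff]
  intro g h
  have h' : g 0 • Gamma3 F 0 1 2 + g 1 • Gamma3 F 0 2 1 + g 2 • St3 F 0 1 2 = 0 := by
    rw [Fin.sum_univ_three] at h
    simpa using h
  have H : ∀ l : List ℕ,
      Wcoeff F l (g 0 • Gamma3 F 0 1 2 + g 1 • Gamma3 F 0 2 1 + g 2 • St3 F 0 1 2) = 0 := by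
    intro l; rw [h', map_zero]
  have h1 := H [0,1,2]
  have h2 := H [0,2,1]
  have h3 := H [2,0,1]
  simp only [Gamma3_expand, St3_expand, map_add, map_sub, map_smul, Wcoeff_mono,
    smul_eq_mul] at h1 h2 h3
  norm_num at h1 h2 h3
  have hg2 : g 2 = 0 := by linear_combination h1 + h2 + h3
  have hg0 : g 0 = 0 := by linear_combination h1 - (h1 + h2 + h3)
  have hg1 : g 1 = 0 := by linear_combination h2 + h1 + h2 + h3
  intro i
  fin_cases i
  · exact hg0
  · exact hg1
  · exact hg2

set_option maxHeartbeats 1000000 in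
theorem weyl_part2 : ∀ g ∈ ({Gamma3 F 0 1 2, Gamma3 F 0 2 1, St3 F 0 1 2} : Set (FreeAlgebra F ℕ)),
    mhComponent F {0, 1, 2} g = g ∧
    ∀ u : ℕ → Weyl F, (∀ i, u i ∈ WV F) → FreeAlgebra.lift F u g = 0 := by
  intro g hg
  have hmem : ∀ (u : ℕ → Weyl F), (∀ i, u i ∈ WV F) →
      ∀ i, ∃ a b : F, a • Wx F + b • Wy F = u i := by
    intro u hu i
    exact Submodule.mem_span_pair.1 (hu i)
  simp only [Set.mem_insert_iff, Set.mem_singleton_iff] at hg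
  rcases hg with rfl | rfl | rfl
  · constructor
    · rw [Gamma3_expand, mh_add, mh_sub, mh_sub, mh_mono F 0 1 2 (by decide),
        mh_mono F 1 0 2 (by decide), mh_mono F 2 0 1 (by decide), mh_mono F 2 1 0 (by decide),
        ← Gamma3_expand]
    · intro u hu
      obtain ⟨p0, q0, hu0⟩ := hmem u hu 0
      obtain ⟨p1, q1, hu1⟩ := hmem u hu 1
      obtain ⟨p2, q2, hu2⟩ := hmem u hu 2
      simp only [Gamma3, map_sub, map_mul, FreeAlgebra.lift_ι_apply]
      rw [← hu0, ← hu1, ← hu2, weyl_comm_explicit]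
      simp [smul_mul_assoc, mul_smul_comm]
  · constructor
    · rw [Gamma3_expand, mh_add, mh_sub, mh_sub, mh_mono F 0 2 1 (by decide),
        mh_mono F 2 0 1 (by decide), mh_mono F 1 0 2 (by decide), mh_mono F 1 2 0 (by decide),
        ← Gamma3_expand]
    · intro u hu
      obtain ⟨p0, q0, hu0⟩ := hmem u hu 0
      obtain ⟨p1, q1, hu1⟩ := hmem u hu 1
      obtain ⟨p2, q2, hu2⟩ := hmem u hu 2
      simp only [Gamma3, map_sub, map_mul, FreeAlgebra.lift_ι_apply]
      rw [← hu0, ← hu1, ← hu2, weyl_comm_explicit]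
      simp [smul_mul_assoc, mul_smul_comm]
  · constructor
    · rw [St3_expand, mh_sub, mh_add, mh_add, mh_sub, mh_sub, mh_mono F 0 1 2 (by decide),
        mh_mono F 0 2 1 (by decide), mh_mono F 1 0 2 (by decide), mh_mono F 1 2 0 (by decide),
        mh_mono F 2 0 1 (by decide), mh_mono F 2 1 0 (by decide), ← St3_expand]
    · intro u hu
      obtain ⟨p0, q0, hu0⟩ := hmem u hu 0
      obtain ⟨p1, q1, hu1⟩ := hmem u hu 1
      obtain ⟨p2, q2, hu2⟩ := hmem u hu 2
      simp only [St3, map_sub, map_add, map_mul, FreeAlgebra.lift_ι_apply]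
      rw [← hu0, ← hu1, ← hu2, weyl_comm_explicit, weyl_comm_explicit, weyl_comm_explicit]
      simp only [mul_smul_comm, mul_one]
      module

variable (f : FreeAlgebra F ℕ) (c1 c2 c3 c4 c5 c6 : F)

set_option maxHeartbeats 1000000 in
theorem weyl_subA
    (hdec : f = c1 • (ι F 0 * ι F 1 * ι F 2) + c2 • (ι F 0 * ι F 2 * ι F 1)
      + c3 • (ι F 1 * ι F 0 * ι F 2) + c4 • (ι F 1 * ι F 2 * ι F 0)
      + c5 • (ι F 2 * ι F 0 * ι F 1) + c6 • (ι F 2 * ι F 1 * ι F 0))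
    (hid : ∀ u : ℕ → Weyl F, (∀ i, u i ∈ WV F) → FreeAlgebra.lift F u f = 0) :
    c1 • (Wy F * Wy F * Wx F) + c2 • (Wy F * Wx F * Wy F) + c3 • (Wy F * Wy F * Wx F)
      + c4 • (Wy F * Wx F * Wy F) + c5 • (Wx F * Wy F * Wy F) + c6 • (Wx F * Wy F * Wy F) = 0 := by
  have hA := hid (fun i => if i = 2 then Wx F else Wy F)
    (fun i => by split <;> [exact weyl_hxmem F; exact weyl_hymem F])
  rw [hdec] at hA
  simp only [map_add, map_smul, map_mul, FreeAlgebra.lift_ι_apply] at hA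
  norm_num at hA
  exact hA

set_option maxHeartbeats 1000000 in
theorem weyl_subB
    (hdec : f = c1 • (ι F 0 * ι F 1 * ι F 2) + c2 • (ι F 0 * ι F 2 * ι F 1)
      + c3 • (ι F 1 * ι F 0 * ι F 2) + c4 • (ι F 1 * ι F 2 * ι F 0)
      + c5 • (ι F 2 * ι F 0 * ι F 1) + c6 • (ι F 2 * ι F 1 * ι F 0))
    (hid : ∀ u : ℕ → Weyl F, (∀ i, u i ∈ WV F) → FreeAlgebra.lift F u f = 0) :
    c1 • (Wy F * Wx F * Wx F) + c2 • (Wy F * Wx F * Wx F) + c3 • (Wx F * Wy F * Wx F)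
      + c4 • (Wx F * Wx F * Wy F) + c5 • (Wx F * Wy F * Wx F) + c6 • (Wx F * Wx F * Wy F) = 0 := by
  have hB := hid (fun i => if i = 0 then Wy F else Wx F)
    (fun i => by split <;> [exact weyl_hymem F; exact weyl_hxmem F])
  rw [hdec] at hB
  simp only [map_add, map_smul, map_mul, FreeAlgebra.lift_ι_apply] at hB
  norm_num at hB
  exact hB

set_option maxHeartbeats 1000000 in
theorem weyl_subC
    (hdec : f = c1 • (ι F 0 * ι F 1 * ι F 2) + c2 • (ι F 0 * ι F 2 * ι F 1)
      + c3 • (ι F 1 * ι F 0 * ι F 2) + c4 • (ι F 1 * ι F 2 * ι F 0)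
      + c5 • (ι F 2 * ι F 0 * ι F 1) + c6 • (ι F 2 * ι F 1 * ι F 0))
    (hid : ∀ u : ℕ → Weyl F, (∀ i, u i ∈ WV F) → FreeAlgebra.lift F u f = 0) :
    c1 • (Wx F * Wy F * Wx F) + c2 • (Wx F * Wx F * Wy F) + c3 • (Wy F * Wx F * Wx F)
      + c4 • (Wy F * Wx F * Wx F) + c5 • (Wx F * Wx F * Wy F) + c6 • (Wx F * Wy F * Wx F) = 0 := by
  have hC := hid (fun i => if i = 1 then Wy F else Wx F)
    (fun i => by split <;> [exact weyl_hymem F; exact weyl_hxmem F])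
  rw [hdec] at hC
  simp only [map_add, map_smul, map_mul, FreeAlgebra.lift_ι_apply] at hC
  norm_num at hC
  exact hC

set_option maxHeartbeats 1000000 in
theorem weyl_extractA
    (hA : c1 • (Wy F * Wy F * Wx F) + c2 • (Wy F * Wx F * Wy F) + c3 • (Wy F * Wy F * Wx F)
      + c4 • (Wy F * Wx F * Wy F) + c5 • (Wx F * Wy F * Wy F) + c6 • (Wx F * Wy F * Wy F) = 0) :
    2*c1 + c2 + 2*c3 + c4 = 0 := by
  have h2 := congrArg (fun T => Polynomial.eval (1:F) ((Wrep F T) (Polynomial.X))) hA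
  simp only [map_add, map_smul, map_mul, Wrep_x, Wrep_y, LinearMap.add_apply,
    LinearMap.smul_apply, Module.End.mul_apply, LinearMap.mulLeft_apply, map_zero,
    LinearMap.zero_apply] at h2
  simp only [Polynomial.derivative_one, mul_one, Polynomial.derivative_mul, Polynomial.derivative_X, Polynomial.derivative_add,
    one_mul, mul_zero, zero_mul, add_zero, zero_add, smul_zero, Polynomial.eval_add,
    Polynomial.eval_smul, smul_eq_mul, Polynomial.eval_mul, Polynomial.eval_X, Polynomial.eval_one,
    Polynomial.eval_zero] at h2
  linear_combination h2

set_option maxHeartbeats 1000000 in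
theorem weyl_extractB
    (hB : c1 • (Wy F * Wx F * Wx F) + c2 • (Wy F * Wx F * Wx F) + c3 • (Wx F * Wy F * Wx F)
      + c4 • (Wx F * Wx F * Wy F) + c5 • (Wx F * Wy F * Wx F) + c6 • (Wx F * Wx F * Wy F) = 0) :
    2*c1 + 2*c2 + c3 + c5 = 0 := by
  have h2 := congrArg (fun T => Polynomial.eval (1:F) ((Wrep F T) (1 : Polynomial F))) hB
  simp only [map_add, map_smul, map_mul, Wrep_x, Wrep_y, LinearMap.add_apply,
    LinearMap.smul_apply, Module.End.mul_apply, LinearMap.mulLeft_apply, map_zero,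
    LinearMap.zero_apply] at h2
  simp only [Polynomial.derivative_one, mul_one, Polynomial.derivative_mul, Polynomial.derivative_X, Polynomial.derivative_add,
    one_mul, mul_zero, zero_mul, add_zero, zero_add, smul_zero, Polynomial.eval_add,
    Polynomial.eval_smul, smul_eq_mul, Polynomial.eval_mul, Polynomial.eval_X, Polynomial.eval_one,
    Polynomial.eval_zero] at h2
  linear_combination h2

set_option maxHeartbeats 1000000 in
theorem weyl_extractC
    (hC : c1 • (Wx F * Wy F * Wx F) + c2 • (Wx F * Wx F * Wy F) + c3 • (Wy F * Wx F * Wx F)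
      + c4 • (Wy F * Wx F * Wx F) + c5 • (Wx F * Wx F * Wy F) + c6 • (Wx F * Wy F * Wx F) = 0) :
    c1 + 2*c3 + 2*c4 + c6 = 0 := by
  have h2 := congrArg (fun T => Polynomial.eval (1:F) ((Wrep F T) (1 : Polynomial F))) hC
  simp only [map_add, map_smul, map_mul, Wrep_x, Wrep_y, LinearMap.add_apply,
    LinearMap.smul_apply, Module.End.mul_apply, LinearMap.mulLeft_apply, map_zero,
    LinearMap.zero_apply] at h2
  simp only [Polynomial.derivative_one, mul_one, Polynomial.derivative_mul, Polynomial.derivative_X, Polynomial.derivative_add,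
    one_mul, mul_zero, zero_mul, add_zero, zero_add, smul_zero, Polynomial.eval_add,
    Polynomial.eval_smul, smul_eq_mul, Polynomial.eval_mul, Polynomial.eval_X, Polynomial.eval_one,
    Polynomial.eval_zero] at h2
  linear_combination h2

set_option maxHeartbeats 1000000 in
theorem weyl_assemble
    (hdec : f = c1 • (ι F 0 * ι F 1 * ι F 2) + c2 • (ι F 0 * ι F 2 * ι F 1)
      + c3 • (ι F 1 * ι F 0 * ι F 2) + c4 • (ι F 1 * ι F 2 * ι F 0)
      + c5 • (ι F 2 * ι F 0 * ι F 1) + c6 • (ι F 2 * ι F 1 * ι F 0))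
    (e1 : 2*c1 + c2 + 2*c3 + c4 = 0)
    (e2 : 2*c1 + 2*c2 + c3 + c5 = 0)
    (e3 : c1 + 2*c3 + 2*c4 + c6 = 0) :
    f ∈ Submodule.span F {Gamma3 F 0 1 2, Gamma3 F 0 2 1, St3 F 0 1 2} := by
  have hc2 : c2 = -(2*c1) - 2*c3 - c4 := by linear_combination e1
  have hc5 : c5 = 2*c1 + 3*c3 + 2*c4 := by linear_combination e2 - 2*e1
  have hc6 : c6 = -c1 - 2*c3 - 2*c4 := by linear_combination e3
  have hfin : f = (-(c3+c4)) • Gamma3 F 0 1 2 + (-(c1+c3)) • Gamma3 F 0 2 1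
      + (c1+c3+c4) • St3 F 0 1 2 := by
    rw [hdec, hc2, hc5, hc6, Gamma3_expand, Gamma3_expand, St3_expand]
    module
  rw [hfin]
  refine Submodule.add_mem _ (Submodule.add_mem _ ?_ ?_) ?_ <;>
    exact Submodule.smul_mem _ _ (Submodule.subset_span (by simp))

set_option maxHeartbeats 1000000 in
theorem weyl_part3 :
    ∀ f : FreeAlgebra F ℕ, mhComponent F {0, 1, 2} f = f →
      (∀ u : ℕ → Weyl F, (∀ i, u i ∈ WV F) → FreeAlgebra.lift F u f = 0) →
      f ∈ Submodule.span F {Gamma3 F 0 1 2, Gamma3 F 0 2 1, St3 F 0 1 2} := by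
  intro f hmh hid
  have hdec := weyl_decomp F f hmh
  exact weyl_assemble F f _ _ _ _ _ _ hdec
    (weyl_extractA F _ _ _ _ _ _ (weyl_subA F f _ _ _ _ _ _ hdec hid))
    (weyl_extractB F _ _ _ _ _ _ (weyl_subB F f _ _ _ _ _ _ hdec hid))
    (weyl_extractC F _ _ _ _ _ _ (weyl_subC F f _ _ _ _ _ _ hdec hid))

theorem weyl_part4 : Gamma3 F 1 2 0 = -Gamma3 F 0 1 2 + Gamma3 F 0 2 1 := by
  rw [Gamma3, Gamma3, Gamma3]
  noncomm_ring

end Parts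

/-- The weak polynomial identities of multidegree (1,1,1) for (A₁, V) form a
3-dimensional space with basis Γ₃(x₁,x₂,x₃), Γ₃(x₁,x₃,x₂), St₃(x₁,x₂,x₃);
moreover Γ₃(x₂,x₃,x₁) = -Γ₃(x₁,x₂,x₃) + Γ₃(x₁,x₃,x₂). Here x₁, x₂, x₃ are the
generators of index 0, 1, 2. -/
theorem weyl_weak_identities_multidegree_111 (F : Type) [Field F] [Infinite F] :
    LinearIndependent F ![Gamma3 F 0 1 2, Gamma3 F 0 2 1, St3 F 0 1 2] ∧
    (∀ g ∈ ({Gamma3 F 0 1 2, Gamma3 F 0 2 1, St3 F 0 1 2} : Set (FreeAlgebra F ℕ)),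
      mhComponent F {0, 1, 2} g = g ∧
      ∀ u : ℕ → Weyl F, (∀ i, u i ∈ WV F) → FreeAlgebra.lift F u g = 0) ∧
    (∀ f : FreeAlgebra F ℕ, mhComponent F {0, 1, 2} f = f →
      (∀ u : ℕ → Weyl F, (∀ i, u i ∈ WV F) → FreeAlgebra.lift F u f = 0) →
      f ∈ Submodule.span F {Gamma3 F 0 1 2, Gamma3 F 0 2 1, St3 F 0 1 2}) ∧
    Gamma3 F 1 2 0 = -Gamma3 F 0 1 2 + Gamma3 F 0 2 1 :=
  ⟨weyl_part1 F, weyl_part2 F, weyl_part3 F, weyl_part4 F⟩
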